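/- Let F(x) = cos(√x) on [0,∞). Then the Cesàro average (1/r)∫₀^r cos(√x) dx tends to 0 as r → ∞, but for every r > 0, sup_{a ≥ 0} (1/r)∫_a^{a+r} cos(√x) dx = 1 and inf_{a ≥ 0} (1/r)∫_a^{a+r} cos(√x) dx = -1. Hence the averages over intervals of length r do not converge uniformly in the left endpoint. -/

import Mathlib

open Real Filter MeasureTheory

lemma contF : Continuous (fun x : ℝ => Real.cos (Real.sqrt x)) :=
  Real.continuous_cos.comp Real.continuous_sqrt

lemma abs_cos_sub_cos_le (x y : ℝ) : |Real.cos x - Real.cos y| ≤ |x - y| := by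
  rw [Real.cos_sub_cos]
  have h1 : |Real.sin ((x + y) / 2)| ≤ 1 := Real.abs_sin_le_one _
  have h2 : |Real.sin ((x - y) / 2)| ≤ |(x - y) / 2| := Real.abs_sin_le_abs
  have h3 : |(-2 : ℝ) * Real.sin ((x + y) / 2) * Real.sin ((x - y) / 2)|
      = 2 * |Real.sin ((x + y) / 2)| * |Real.sin ((x - y) / 2)| := by
    rw [abs_mul, abs_mul]; norm_num
  rw [h3]
  have h4 : |(x - y) / 2| = |x - y| / 2 := by rw [abs_div]; norm_num
  nlinarith [abs_nonneg (Real.sin ((x - y) / 2)), abs_nonneg (x - y),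
    abs_nonneg (Real.sin ((x + y) / 2))]

lemma sqrt_tendsto_atTop : Tendsto Real.sqrt atTop atTop := by
  apply tendsto_atTop_atTop.2
  intro b
  refine ⟨b ^ 2, fun x hx => ?_⟩
  calc b ≤ |b| := le_abs_self b
    _ = Real.sqrt (b ^ 2) := (Real.sqrt_sq_eq_abs b).symm
    _ ≤ Real.sqrt x := Real.sqrt_le_sqrt hx

/-- Closed form of the integral from 0. -/
lemma key_integral (r : ℝ) (hr : 0 ≤ r) :
    ∫ x in (0:ℝ)..r, Real.cos (Real.sqrt x)
      = 2 * (Real.sqrt r * Real.sin (Real.sqrt r) + Real.cos (Real.sqrt r)) - 2 := by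
  have hs : (0:ℝ) ≤ Real.sqrt r := Real.sqrt_nonneg r
  have hsub : ∫ t in (0:ℝ)..(Real.sqrt r), (2 * t) • ((fun x => Real.cos (Real.sqrt x)) ∘ (fun t => t ^ 2)) t
      = ∫ x in ((0:ℝ)^2)..((Real.sqrt r)^2), Real.cos (Real.sqrt x) := by
    apply intervalIntegral.integral_comp_smul_deriv
    · intro x _
      simpa [mul_comm] using (hasDerivAt_pow 2 x)
    · exact (continuous_const.mul continuous_id).continuousOn
    · exact contF
  have h0 : ((0:ℝ)^2) = 0 := by norm_num
  have h1 : ((Real.sqrt r)^2) = r := Real.sq_sqrt hr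
  rw [h0, h1] at hsub
  have hcong : ∫ t in (0:ℝ)..(Real.sqrt r), (2 * t) • ((fun x => Real.cos (Real.sqrt x)) ∘ (fun t => t ^ 2)) t
      = ∫ t in (0:ℝ)..(Real.sqrt r), 2 * t * Real.cos t := by
    apply intervalIntegral.integral_congr
    intro t ht
    rw [Set.uIcc_of_le hs] at ht
    simp only [Function.comp, smul_eq_mul]
    rw [Real.sqrt_sq ht.1]
  have hftc : ∫ t in (0:ℝ)..(Real.sqrt r), 2 * t * Real.cos t
      = 2 * (Real.sqrt r * Real.sin (Real.sqrt r) + Real.cos (Real.sqrt r)) - 2 := by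
    have hderiv : ∀ t ∈ Set.uIcc (0:ℝ) (Real.sqrt r),
        HasDerivAt (fun t => 2 * (t * Real.sin t + Real.cos t)) (2 * t * Real.cos t) t := by
      intro t _
      have h := (((hasDerivAt_id t).mul (Real.hasDerivAt_sin t)).add (Real.hasDerivAt_cos t)).const_mul 2
      have h2 : HasDerivAt (fun t => 2 * (t * Real.sin t + Real.cos t))
          (2 * (1 * Real.sin t + t * Real.cos t + -Real.sin t)) t := h
      convert h2 using 1
      ring
    have hint : IntervalIntegrable (fun t => 2 * t * Real.cos t) volume 0 (Real.sqrt r) :=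
      (Continuous.mul (continuous_const.mul continuous_id) Real.continuous_cos).intervalIntegrable _ _
    rw [intervalIntegral.integral_eq_sub_of_hasDerivAt hderiv hint]
    simp
  rw [← hsub, hcong, hftc]

/-- The average over `[a, a+r]` is close to `cos √a` when `a` is large. -/
lemma avg_close (r : ℝ) (hr : 0 < r) (a : ℝ) (ha : 0 < a) :
    |(1 / r) * (∫ x in a..(a + r), Real.cos (Real.sqrt x)) - Real.cos (Real.sqrt a)|
      ≤ r / (2 * Real.sqrt a) := by
  have hsa : 0 < Real.sqrt a := Real.sqrt_pos.2 ha
  have hbound : ∀ x ∈ Set.uIoc a (a + r),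
      ‖Real.cos (Real.sqrt x) - Real.cos (Real.sqrt a)‖ ≤ r / (2 * Real.sqrt a) := by
    intro x hx
    rw [Set.uIoc_of_le (by linarith)] at hx
    have hx1 : a < x := hx.1
    have hx2 : x ≤ a + r := hx.2
    have h1 : |Real.cos (Real.sqrt x) - Real.cos (Real.sqrt a)| ≤ |Real.sqrt x - Real.sqrt a| :=
      _root_.abs_cos_sub_cos_le _ _
    have h2 : Real.sqrt a ≤ Real.sqrt x := Real.sqrt_le_sqrt hx1.le
    have h3 : Real.sqrt x ≤ Real.sqrt a + r / (2 * Real.sqrt a) := by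
      have hb : x ≤ (Real.sqrt a + r / (2 * Real.sqrt a)) ^ 2 := by
        have hsq : Real.sqrt a ^ 2 = a := Real.sq_sqrt ha.le
        have hexp : (Real.sqrt a + r / (2 * Real.sqrt a)) ^ 2
            = a + r + (r / (2 * Real.sqrt a)) ^ 2 := by
          field_simp
          nlinarith [hsq]
        rw [hexp]
        nlinarith [sq_nonneg (r / (2 * Real.sqrt a))]
      calc Real.sqrt x ≤ Real.sqrt ((Real.sqrt a + r / (2 * Real.sqrt a)) ^ 2) :=
            Real.sqrt_le_sqrt hb
        _ = Real.sqrt a + r / (2 * Real.sqrt a) := by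
            rw [Real.sqrt_sq (by positivity)]
    have h4 : |Real.sqrt x - Real.sqrt a| ≤ r / (2 * Real.sqrt a) := by
      rw [abs_of_nonneg (by linarith)]; linarith
    calc ‖Real.cos (Real.sqrt x) - Real.cos (Real.sqrt a)‖
        = |Real.cos (Real.sqrt x) - Real.cos (Real.sqrt a)| := rfl
      _ ≤ |Real.sqrt x - Real.sqrt a| := h1
      _ ≤ r / (2 * Real.sqrt a) := h4
  have hintF : IntervalIntegrable (fun x => Real.cos (Real.sqrt x)) volume a (a + r) :=
    contF.intervalIntegrable _ _
  have hintC : IntervalIntegrable (fun _ : ℝ => Real.cos (Real.sqrt a)) volume a (a + r) :=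
    intervalIntegrable_const
  have hnorm : ‖∫ x in a..(a + r), (Real.cos (Real.sqrt x) - Real.cos (Real.sqrt a))‖
      ≤ (r / (2 * Real.sqrt a)) * |(a + r) - a| :=
    intervalIntegral.norm_integral_le_of_norm_le_const hbound
  rw [intervalIntegral.integral_sub hintF hintC, intervalIntegral.integral_const] at hnorm
  have habs : |(a + r) - a| = r := by rw [abs_of_nonneg (by linarith)]; ring
  rw [habs] at hnorm
  have hconst : ((a + r) - a) • Real.cos (Real.sqrt a) = r * Real.cos (Real.sqrt a) := by
    simp
  rw [hconst] at hnorm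
  have key : (1 / r) * (∫ x in a..(a + r), Real.cos (Real.sqrt x)) - Real.cos (Real.sqrt a)
      = (1 / r) * ((∫ x in a..(a + r), Real.cos (Real.sqrt x)) - r * Real.cos (Real.sqrt a)) := by
    field_simp
  rw [key, abs_mul, abs_of_nonneg (by positivity : (0:ℝ) ≤ 1 / r)]
  calc (1 / r) * |(∫ x in a..(a + r), Real.cos (Real.sqrt x)) - r * Real.cos (Real.sqrt a)|
      ≤ (1 / r) * ((r / (2 * Real.sqrt a)) * r) := by
        apply mul_le_mul_of_nonneg_left _ (by positivity)
        exact hnorm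
    _ = r / (2 * Real.sqrt a) := by field_simp

/-- Every average has absolute value at most 1. -/
lemma avg_abs_le_one (r : ℝ) (hr : 0 < r) (a : ℝ) :
    |(1 / r) * ∫ x in a..(a + r), Real.cos (Real.sqrt x)| ≤ 1 := by
  have hbound : ∀ x ∈ Set.uIoc a (a + r), ‖Real.cos (Real.sqrt x)‖ ≤ 1 := fun x _ =>
    Real.abs_cos_le_one _
  have hnorm := intervalIntegral.norm_integral_le_of_norm_le_const hbound
  have habs : |(a + r) - a| = r := by rw [abs_of_nonneg (by linarith)]; ring
  rw [habs, one_mul] at hnorm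
  rw [abs_mul, abs_of_nonneg (by positivity : (0:ℝ) ≤ 1 / r)]
  calc (1 / r) * |∫ x in a..(a + r), Real.cos (Real.sqrt x)| ≤ (1 / r) * r := by
        apply mul_le_mul_of_nonneg_left hnorm (by positivity)
    _ = 1 := by field_simp

/-- `F(x) = cos √x` has Cesàro average 0 over `[0,r]` as `r → ∞`,
but the sup (resp. inf) over left endpoints `a ≥ 0` of the averages over `[a, a+r]`
is `1` (resp. `-1`) for every `r > 0`; hence the interval averages do not converge
uniformly in the left endpoint. -/
theorem stmt_0 :
    Tendsto (fun r : ℝ => (1 / r) * ∫ x in (0:ℝ)..r, Real.cos (Real.sqrt x))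
      atTop (nhds 0) ∧
    (∀ r : ℝ, 0 < r →
      IsLUB {y : ℝ | ∃ a : ℝ, 0 ≤ a ∧
        y = (1 / r) * ∫ x in a..(a + r), Real.cos (Real.sqrt x)} 1 ∧
      IsGLB {y : ℝ | ∃ a : ℝ, 0 ≤ a ∧
        y = (1 / r) * ∫ x in a..(a + r), Real.cos (Real.sqrt x)} (-1)) ∧
    ¬ ∀ ε : ℝ, 0 < ε → ∃ R : ℝ, 0 < R ∧ ∀ r : ℝ, R ≤ r → ∀ a : ℝ, 0 ≤ a →
        |(1 / r) * ∫ x in a..(a + r), Real.cos (Real.sqrt x)| ≤ ε := by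
  have pi_pos := Real.pi_pos
  constructor
  · -- Cesàro average tends to 0
    have hbd : ∀ᶠ r in atTop, ‖(1 / r) * ∫ x in (0:ℝ)..r, Real.cos (Real.sqrt x)‖
        ≤ 2 / Real.sqrt r + 4 / r := by
      filter_upwards [eventually_ge_atTop (1:ℝ)] with r hr
      have hr0 : (0:ℝ) < r := by linarith
      have hs : (0:ℝ) < Real.sqrt r := Real.sqrt_pos.2 hr0
      have hsq : Real.sqrt r * Real.sqrt r = r := Real.mul_self_sqrt hr0.le
      rw [key_integral r hr0.le]
      have h1 : |Real.sin (Real.sqrt r)| ≤ 1 := Real.abs_sin_le_one _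
      have h2 : |Real.cos (Real.sqrt r)| ≤ 1 := Real.abs_cos_le_one _
      have hb : |2 * (Real.sqrt r * Real.sin (Real.sqrt r) + Real.cos (Real.sqrt r)) - 2|
          ≤ 2 * Real.sqrt r + 4 := by
        have := abs_mul (Real.sqrt r) (Real.sin (Real.sqrt r))
        have h3 : |Real.sqrt r * Real.sin (Real.sqrt r)| ≤ Real.sqrt r := by
          rw [abs_mul, abs_of_nonneg hs.le]
          nlinarith
        calc |2 * (Real.sqrt r * Real.sin (Real.sqrt r) + Real.cos (Real.sqrt r)) - 2|
            ≤ 2 * |Real.sqrt r * Real.sin (Real.sqrt r) + Real.cos (Real.sqrt r)| + 2 := by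
              have := abs_sub (2 * (Real.sqrt r * Real.sin (Real.sqrt r) + Real.cos (Real.sqrt r))) (2:ℝ)
              calc |2 * (Real.sqrt r * Real.sin (Real.sqrt r) + Real.cos (Real.sqrt r)) - 2|
                  ≤ |2 * (Real.sqrt r * Real.sin (Real.sqrt r) + Real.cos (Real.sqrt r))| + |(2:ℝ)| :=
                    abs_sub _ _
                _ = 2 * |Real.sqrt r * Real.sin (Real.sqrt r) + Real.cos (Real.sqrt r)| + 2 := by
                    rw [abs_mul]; norm_num
          _ ≤ 2 * (Real.sqrt r + 1) + 2 := by
              have := abs_add_le (Real.sqrt r * Real.sin (Real.sqrt r)) (Real.cos (Real.sqrt r))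
              nlinarith
          _ = 2 * Real.sqrt r + 4 := by ring
      rw [norm_mul, Real.norm_eq_abs, Real.norm_eq_abs, abs_of_nonneg (by positivity : (0:ℝ) ≤ 1/r)]
      calc (1 / r) * |2 * (Real.sqrt r * Real.sin (Real.sqrt r) + Real.cos (Real.sqrt r)) - 2|
          ≤ (1 / r) * (2 * Real.sqrt r + 4) :=
            mul_le_mul_of_nonneg_left hb (by positivity)
        _ = 2 / Real.sqrt r + 4 / r := by
            have hne : Real.sqrt r ≠ 0 := hs.ne'
            rw [← hsq]
            field_simp
            rw [Real.sqrt_sq hs.le]; ring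
    have hgt : Tendsto (fun r : ℝ => 2 / Real.sqrt r + 4 / r) atTop (nhds 0) := by
      have h1 : Tendsto (fun r : ℝ => 2 / Real.sqrt r) atTop (nhds 0) := by
        simpa [div_eq_mul_inv] using (sqrt_tendsto_atTop.inv_tendsto_atTop).const_mul (2:ℝ)
      have h2 : Tendsto (fun r : ℝ => 4 / r) atTop (nhds 0) := by
        simpa [div_eq_mul_inv] using (tendsto_inv_atTop_zero (𝕜 := ℝ)).const_mul (4:ℝ)
      simpa using h1.add h2
    exact squeeze_zero_norm' hbd hgt
  constructor
  · -- LUB / GLB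
    intro r hr
    set S := {y : ℝ | ∃ a : ℝ, 0 ≤ a ∧
        y = (1 / r) * ∫ x in a..(a + r), Real.cos (Real.sqrt x)} with hS
    have hub : ∀ y ∈ S, y ≤ 1 := by
      rintro y ⟨a, _, rfl⟩
      have := avg_abs_le_one r hr a
      exact (abs_le.1 this).2
    have hlb : ∀ y ∈ S, -1 ≤ y := by
      rintro y ⟨a, _, rfl⟩
      have := avg_abs_le_one r hr a
      exact (abs_le.1 this).1
    -- for any ε > 0 there are elements near 1 and near -1
    have hnear : ∀ ε : ℝ, 0 < ε → (∃ y ∈ S, 1 - ε < y) ∧ (∃ y ∈ S, y < -1 + ε) := by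
      intro ε hε
      obtain ⟨n, hn⟩ := exists_nat_gt (r / (2 * Real.pi * ε) + 1)
      have hn1 : (1:ℝ) ≤ n := by
        have : (0:ℝ) < r / (2 * Real.pi * ε) := by positivity
        linarith
      have hnpos : (0:ℝ) < n := by linarith
      constructor
      · -- sup side: a = (n * (2π))²
        set t := (n : ℝ) * (2 * Real.pi) with ht
        have htpos : 0 < t := by positivity
        set a := t ^ 2 with haa
        have hapos : 0 < a := by positivity
        have hsa : Real.sqrt a = t := Real.sqrt_sq htpos.le
        have hcos : Real.cos (Real.sqrt a) = 1 := by
          rw [hsa]; exact Real.cos_nat_mul_two_pi n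
        have hclose := avg_close r hr a hapos
        rw [hcos, hsa] at hclose
        refine ⟨(1 / r) * ∫ x in a..(a + r), Real.cos (Real.sqrt x), ⟨a, hapos.le, rfl⟩, ?_⟩
        have hsmall : r / (2 * t) < ε := by
          rw [div_lt_iff₀ (by positivity)]
          have h2 : r / (2 * Real.pi * ε) < n := by linarith
          have := (div_lt_iff₀ (by positivity : (0:ℝ) < 2 * Real.pi * ε)).1 h2
          calc r < n * (2 * Real.pi * ε) := this
            _ ≤ ε * (2 * t) := by rw [ht]; nlinarith
        have := (abs_le.1 hclose).1
        linarith
      · -- inf side: a = (n * (2π) + π)²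
        set t := (n : ℝ) * (2 * Real.pi) + Real.pi with ht
        have htpos : 0 < t := by positivity
        set a := t ^ 2 with haa
        have hapos : 0 < a := by positivity
        have hsa : Real.sqrt a = t := Real.sqrt_sq htpos.le
        have hcos : Real.cos (Real.sqrt a) = -1 := by
          rw [hsa]; exact Real.cos_nat_mul_two_pi_add_pi n
        have hclose := avg_close r hr a hapos
        rw [hcos, hsa] at hclose
        refine ⟨(1 / r) * ∫ x in a..(a + r), Real.cos (Real.sqrt x), ⟨a, hapos.le, rfl⟩, ?_⟩
        have hsmall : r / (2 * t) < ε := by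
          rw [div_lt_iff₀ (by positivity)]
          have h2 : r / (2 * Real.pi * ε) < n := by linarith
          have := (div_lt_iff₀ (by positivity : (0:ℝ) < 2 * Real.pi * ε)).1 h2
          have hle : ε * ((n:ℝ) * (2 * Real.pi)) ≤ ε * (2 * t) := by
            apply mul_le_mul_of_nonneg_left _ hε.le
            rw [ht]
            nlinarith
          calc r < n * (2 * Real.pi * ε) := this
            _ = ε * ((n:ℝ) * (2 * Real.pi)) := by ring
            _ ≤ ε * (2 * t) := hle
        have := (abs_le.1 hclose).2
        linarith
      
    constructor
    · constructor
      · intro y hy; exact hub y hy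
      · intro b hb
        by_contra hcon
        push_neg at hcon
        obtain ⟨⟨y, hyS, hy⟩, _⟩ := hnear (1 - b) (by linarith)
        have := hb hyS
        linarith
    · constructor
      · intro y hy; exact hlb y hy
      · intro b hb
        by_contra hcon
        push_neg at hcon
        obtain ⟨_, ⟨y, hyS, hy⟩⟩ := hnear (b - (-1)) (by linarith)
        have := hb hyS
        linarith
  · -- no uniform convergence
    intro h
    obtain ⟨R, hR, hRprop⟩ := h (1/2) (by norm_num)
    set r := max R 1 with hrdef
    have hrR : R ≤ r := le_max_left _ _
    have hr1 : (1:ℝ) ≤ r := le_max_right _ _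
    have hrpos : 0 < r := by linarith
    -- construct an element close to 1
    obtain ⟨n, hn⟩ := exists_nat_gt (r / Real.pi + 1)
    have hnpos : (0:ℝ) < n := by
      have : (0:ℝ) < r / Real.pi := by positivity
      linarith
    set t := (n : ℝ) * (2 * Real.pi) with ht
    have htpos : 0 < t := by positivity
    set a := t ^ 2 with haa
    have hapos : 0 < a := by positivity
    have hsa : Real.sqrt a = t := Real.sqrt_sq htpos.le
    have hcos : Real.cos (Real.sqrt a) = 1 := by
      rw [hsa]; exact Real.cos_nat_mul_two_pi n
    have hclose := avg_close r hrpos a hapos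
    rw [hcos, hsa] at hclose
    have hsmall : r / (2 * t) < 1/4 := by
      rw [div_lt_iff₀ (by positivity)]
      have h2 : r / Real.pi < n := by linarith
      have := (div_lt_iff₀ pi_pos).1 h2
      calc r < n * Real.pi := this
        _ ≤ 1/4 * (2 * t) := by rw [ht]; nlinarith
    have hbig : 3/4 ≤ (1 / r) * ∫ x in a..(a + r), Real.cos (Real.sqrt x) := by
      have := (abs_le.1 hclose).1
      linarith
    have := hRprop r hrR a hapos.le
    have habs : |(1 / r) * ∫ x in a..(a + r), Real.cos (Real.sqrt x)|
        ≥ (1 / r) * ∫ x in a..(a + r), Real.cos (Real.sqrt x) := le_abs_self _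
    linarith
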